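/- Let O'/p' be a DVR quotient situation obtained by blowing up: with O noetherian local domain, p prime, O/p a DVR with uniformizer π, O' = ∑_{i≥0} π^{-i}p^i localized at a suitable maximal ideal, p₁ the ideal generated by π^{-1}p — then O'/p₁ ≅ O/p; in particular blowing up Spec O along V(p) induces an isomorphism on the curve C = Spec O/p when O/p is a DVR. -/

import Mathlib

set_option synthInstance.maxHeartbeats 800000
set_option maxHeartbeats 1600000

/-- The affine blow-up algebra `O' = ∑_{i≥0} π^{-i} p^i` inside `Frac(O)`,
realized as the `O`-subalgebra of `Frac(O)` generated by `π^{-1}p`. -/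
noncomputable def blowupAlgebra (O : Type*) [CommRing O] [IsDomain O]
    (p : Ideal O) (π : O) : Subalgebra O (FractionRing O) :=
  Algebra.adjoin O {y : FractionRing O | ∃ x ∈ p,
    y * algebraMap O (FractionRing O) π = algebraMap O (FractionRing O) x}

/-- The ideal `p₁` of `O'` generated by `π^{-1}p`. -/
noncomputable def blowupIdeal (O : Type*) [CommRing O] [IsDomain O]
    (p : Ideal O) (π : O) : Ideal (blowupAlgebra O p π) :=
  Ideal.span {a : blowupAlgebra O p π | ∃ x ∈ p,
    (a : FractionRing O) * algebraMap O (FractionRing O) π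
      = algebraMap O (FractionRing O) x}

section aux

variable {O : Type*} [CommRing O] [IsDomain O] (p : Ideal O) (π : O)

private lemma lemA (b : FractionRing O) (hb : b ∈ blowupAlgebra O p π) :
    ∃ (N : ℕ) (c : O), b * (algebraMap O (FractionRing O) π) ^ N
      = algebraMap O (FractionRing O) c := by
  induction hb using Algebra.adjoin_induction with
  | mem x hx =>
      obtain ⟨c, _, hc⟩ := hx
      exact ⟨1, c, by simpa using hc⟩
  | algebraMap r => exact ⟨0, r, by simp⟩
  | add x y hx hy ihx ihy =>
      obtain ⟨N₁, c₁, h₁⟩ := ihx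
      obtain ⟨N₂, c₂, h₂⟩ := ihy
      refine ⟨N₁ + N₂, c₁ * π ^ N₂ + c₂ * π ^ N₁, ?_⟩
      have e : (x + y) * (algebraMap O (FractionRing O) π) ^ (N₁ + N₂)
          = (x * (algebraMap O (FractionRing O) π) ^ N₁)
              * (algebraMap O (FractionRing O) π) ^ N₂
            + (y * (algebraMap O (FractionRing O) π) ^ N₂)
              * (algebraMap O (FractionRing O) π) ^ N₁ := by ring
      rw [e, h₁, h₂, map_add, map_mul, map_mul, map_pow, map_pow]
  | mul x y hx hy ihx ihy =>
      obtain ⟨N₁, c₁, h₁⟩ := ihx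
      obtain ⟨N₂, c₂, h₂⟩ := ihy
      refine ⟨N₁ + N₂, c₁ * c₂, ?_⟩
      have e : (x * y) * (algebraMap O (FractionRing O) π) ^ (N₁ + N₂)
          = (x * (algebraMap O (FractionRing O) π) ^ N₁)
              * (y * (algebraMap O (FractionRing O) π) ^ N₂) := by ring
      rw [e, h₁, h₂, map_mul]

private lemma lemB (b : blowupAlgebra O p π) (hb : b ∈ blowupIdeal O p π) :
    ∃ (N : ℕ), ∃ c ∈ p, (b : FractionRing O) * (algebraMap O (FractionRing O) π) ^ N
      = algebraMap O (FractionRing O) c := by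
  induction hb using Submodule.span_induction with
  | mem x hx =>
      obtain ⟨c, hcp, hc⟩ := hx
      exact ⟨1, c, hcp, by simpa using hc⟩
  | zero => exact ⟨0, 0, p.zero_mem, by simp⟩
  | add x y hx hy ihx ihy =>
      obtain ⟨N₁, c₁, hc₁, h₁⟩ := ihx
      obtain ⟨N₂, c₂, hc₂, h₂⟩ := ihy
      refine ⟨N₁ + N₂, c₁ * π ^ N₂ + c₂ * π ^ N₁,
        p.add_mem (p.mul_mem_right _ hc₁) (p.mul_mem_right _ hc₂), ?_⟩
      have e : ((x + y : blowupAlgebra O p π) : FractionRing O)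
            * (algebraMap O (FractionRing O) π) ^ (N₁ + N₂)
          = ((x : FractionRing O) * (algebraMap O (FractionRing O) π) ^ N₁)
              * (algebraMap O (FractionRing O) π) ^ N₂
            + ((y : FractionRing O) * (algebraMap O (FractionRing O) π) ^ N₂)
              * (algebraMap O (FractionRing O) π) ^ N₁ := by
        push_cast; ring
      rw [e, h₁, h₂, map_add, map_mul, map_mul, map_pow, map_pow]
  | smul a x hx ihx =>
      obtain ⟨N₁, c₁, hc₁, h₁⟩ := ihx
      obtain ⟨N₂, c₂, h₂⟩ := lemA p π (a : FractionRing O) a.2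
      refine ⟨N₂ + N₁, c₂ * c₁, p.mul_mem_left _ hc₁, ?_⟩
      have e : ((a • x : blowupAlgebra O p π) : FractionRing O)
            * (algebraMap O (FractionRing O) π) ^ (N₂ + N₁)
          = ((a : FractionRing O) * (algebraMap O (FractionRing O) π) ^ N₂)
              * ((x : FractionRing O) * (algebraMap O (FractionRing O) π) ^ N₁) := by
        push_cast [smul_eq_mul]; ring
      rw [e, h₁, h₂, map_mul]

private lemma lemC (b : FractionRing O) (hb : b ∈ blowupAlgebra O p π) :
    ∃ (a : O) (j : blowupAlgebra O p π), j ∈ blowupIdeal O p π ∧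
      (j : FractionRing O) = b - algebraMap O (FractionRing O) a := by
  induction hb using Algebra.adjoin_induction with
  | mem x hx =>
      refine ⟨0, ⟨x, Algebra.subset_adjoin hx⟩, Ideal.subset_span hx, by simp⟩
  | algebraMap r => exact ⟨r, 0, (blowupIdeal O p π).zero_mem, by simp⟩
  | add x y hx hy ihx ihy =>
      obtain ⟨a₁, j₁, hj₁, e₁⟩ := ihx
      obtain ⟨a₂, j₂, hj₂, e₂⟩ := ihy
      refine ⟨a₁ + a₂, j₁ + j₂, (blowupIdeal O p π).add_mem hj₁ hj₂, ?_⟩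
      have hcast : ∀ r : O, (Algebra.cast r : FractionRing O) = algebraMap O (FractionRing O) r :=
        fun r => rfl
      push_cast
      simp only [hcast]
      rw [e₁, e₂]
      ring
  | mul x y hx hy ihx ihy =>
      obtain ⟨a₁, j₁, hj₁, e₁⟩ := ihx
      obtain ⟨a₂, j₂, hj₂, e₂⟩ := ihy
      refine ⟨a₁ * a₂, j₁ * ⟨y, hy⟩ + algebraMap O (blowupAlgebra O p π) a₁ * j₂,
        (blowupIdeal O p π).add_mem ((blowupIdeal O p π).mul_mem_right _ hj₁)
          ((blowupIdeal O p π).mul_mem_left _ hj₂), ?_⟩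
      have hcast : ∀ r : O, (Algebra.cast r : FractionRing O) = algebraMap O (FractionRing O) r :=
        fun r => rfl
      push_cast
      simp only [hcast]
      rw [e₁, e₂]
      ring

end aux

theorem blowup_quotient_iso
    (O : Type*) [CommRing O] [IsDomain O] [IsNoetherianRing O] [IsLocalRing O]
    (p : Ideal O) [p.IsPrime] [IsDiscreteValuationRing (O ⧸ p)]
    (π : O) (hπ : Irreducible (Ideal.Quotient.mk p π))
    (h : p ≤ (blowupIdeal O p π).comap (algebraMap O (blowupAlgebra O p π))) :
    Function.Bijective
      (Ideal.quotientMap (blowupIdeal O p π) (algebraMap O (blowupAlgebra O p π)) h) := by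
  have hπp : π ∉ p := by
    intro hmem
    exact hπ.ne_zero ((Ideal.Quotient.eq_zero_iff_mem).2 hmem)
  constructor
  · refine Ideal.quotientMap_injective' ?_
    intro a ha
    rw [Ideal.mem_comap] at ha
    obtain ⟨N, c, hcp, hc⟩ := lemB p π _ ha
    have hcoe : ((algebraMap O (blowupAlgebra O p π) a : blowupAlgebra O p π) : FractionRing O)
        = algebraMap O (FractionRing O) a := rfl
    rw [hcoe, ← map_pow, ← map_mul] at hc
    have hinj : Function.Injective (algebraMap O (FractionRing O)) :=
      IsFractionRing.injective O (FractionRing O)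
    have : a * π ^ N ∈ p := hinj hc ▸ hcp
    rcases (inferInstance : p.IsPrime).mem_or_mem this with h1 | h1
    · exact h1
    · exact absurd ((inferInstance : p.IsPrime).mem_of_pow_mem _ h1) hπp
  · intro z
    obtain ⟨b, rfl⟩ := Ideal.Quotient.mk_surjective z
    obtain ⟨a, j, hj, e⟩ := lemC p π (b : FractionRing O) b.2
    refine ⟨Ideal.Quotient.mk p a, ?_⟩
    rw [Ideal.quotientMap_mk]
    rw [Ideal.Quotient.eq]
    have hco : ((algebraMap O (blowupAlgebra O p π) a : blowupAlgebra O p π)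
        : FractionRing O) = algebraMap O (FractionRing O) a := rfl
    have : algebraMap O (blowupAlgebra O p π) a - b = -j := by
      apply Subtype.ext
      push_cast
      rw [e]
      ring
    rw [this]
    exact (blowupIdeal O p π).neg_mem hj
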